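/- With the notation of the context, suppose r4 ≥ 1 and n'_{r4} = 0. Then for all x > 0, Ω^{(α)}[n_1,…,n_{r1}; m_1,…,m_{r2}; m'_1,…,m'_{r3}; n'_1,…,n'_{r4}](x) = (−1)^{r1+r2+r4−1} · (∏_{i=1}^{r1}(n_i + 1) · ∏_{i=1}^{r2}(m_i + α)) · Ω^{(α−1)}[n_1+1,…,n_{r1}+1; m_1,…,m_{r2}; m'_1,…,m'_{r3}; n'_1−1,…,n'_{r4−1}−1](x), where on the right-hand side the last sequence has r4−1 entries (the entry n'_{r4} = 0 has been removed and every remaining entry decreased by 1). -/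

import Mathlib

open scoped BigOperators

/-- The Laguerre polynomial `L_n^{(α)}` as a function on `ℝ`; it is `0` for `n < 0`. -/
noncomputable def laguerre (α : ℝ) (n : ℤ) (x : ℝ) : ℝ :=
  if n < 0 then 0 else
    ∑ k ∈ Finset.range (n.toNat + 1),
      ((-1 : ℝ) ^ k / (Nat.factorial k : ℝ)) *
        ((∏ i ∈ Finset.Icc (k + 1) n.toNat, (α + (i : ℝ))) / (Nat.factorial (n.toNat - k) : ℝ)) *
        x ^ k

/-- The Wronskian `Wr[f_1, …, f_r](x) = det (f_i^{(j-1)}(x))`. -/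
noncomputable def Wr {r : ℕ} (f : Fin r → ℝ → ℝ) (x : ℝ) : ℝ :=
  Matrix.det (Matrix.of fun i j : Fin r => iteratedDeriv (j : ℕ) (f i) x)

/-- `Ω^{(α)}[n_1,…,n_{r1}; m_1,…,m_{r2}; m'_1,…,m'_{r3}; n'_1,…,n'_{r4}](x)
  = e^{−(r2+r4)x} x^{(α+r1+r2)(r3+r4)} Wr[f_1,…,f_r](x)` built out of the four types of
eigenfunctions of the Laguerre differential operator (0-indexed sequences `a, b, c, d`). -/
noncomputable def Omega4 (α : ℝ) (r1 r2 r3 r4 : ℕ) (a b c d : ℕ → ℕ) (x : ℝ) : ℝ :=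
  Real.exp (-((r2 : ℝ) + (r4 : ℝ)) * x) *
    x ^ ((α + (r1 : ℝ) + (r2 : ℝ)) * ((r3 : ℝ) + (r4 : ℝ))) *
    Wr (fun i : Fin (r1 + r2 + r3 + r4) => fun y =>
      if (i : ℕ) < r1 then laguerre α (a (i : ℕ)) y
      else if (i : ℕ) < r1 + r2 then Real.exp y * laguerre α (b ((i : ℕ) - r1)) (-y)
      else if (i : ℕ) < r1 + r2 + r3 then
        y ^ (-α) * laguerre (-α) (c ((i : ℕ) - r1 - r2)) y
      else Real.exp y * y ^ (-α) * laguerre (-α) (d ((i : ℕ) - r1 - r2 - r3)) (-y)) x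


open Finset Polynomial

noncomputable def lagCo (α : ℝ) (n k : ℕ) : ℝ :=
  ((-1:ℝ)^k / (Nat.factorial k : ℝ)) *
    ((∏ i ∈ Finset.Icc (k+1) n, (α + (i:ℝ))) / (Nat.factorial (n-k) : ℝ))

noncomputable def lagP (α : ℝ) (n : ℕ) : Polynomial ℝ :=
  ∑ k ∈ Finset.range (n+1), Polynomial.C (lagCo α n k) * Polynomial.X ^ k

lemma coeff_lagP (α : ℝ) (n k : ℕ) :
    (lagP α n).coeff k = if k ≤ n then lagCo α n k else 0 := by
  rw [lagP, Polynomial.finset_sum_coeff]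
  simp only [Polynomial.coeff_C_mul, Polynomial.coeff_X_pow]
  by_cases h : k ≤ n
  · rw [Finset.sum_eq_single k]
    · simp [h]
    · intro b _ hbk; simp [Ne.symm hbk]
    · intro hk; exact absurd (Finset.mem_range.2 (Nat.lt_succ_of_le h)) hk
  · rw [if_neg h, Finset.sum_eq_zero]
    intro b hb
    have : b ≠ k := by
      rintro rfl; exact h (Nat.lt_succ_iff.1 (Finset.mem_range.1 hb))
    rw [if_neg (fun h' => this h'.symm), mul_zero]

-- product shift lemma
lemma prod_shift (α : ℝ) (a b : ℕ) :
    (∏ i ∈ Finset.Icc a b, (α + 1 + (i:ℝ))) = ∏ i ∈ Finset.Icc (a+1) (b+1), (α + (i:ℝ)) := by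
  rw [show Finset.Icc (a+1) (b+1) = (Finset.Icc a b).map (addRightEmbedding 1) by
    rw [Finset.map_add_right_Icc], Finset.prod_map]
  apply Finset.prod_congr rfl
  intro i _
  simp [addRightEmbedding]
  push_cast
  ring

-- peel left
lemma prod_peel_left (α : ℝ) (a b : ℕ) (h : a ≤ b) :
    (∏ i ∈ Finset.Icc a b, (α + (i:ℝ))) = (α + a) * ∏ i ∈ Finset.Icc (a+1) b, (α + (i:ℝ)) := by
  rw [show Finset.Icc a b = insert a (Finset.Icc (a+1) b) by
    ext i; simp [Finset.mem_Icc, Finset.mem_insert]; omega]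
  rw [Finset.prod_insert (by simp)]

lemma prod_shift_down (α : ℝ) (a b : ℕ) :
    (∏ i ∈ Finset.Icc (a+1) (b+1), (α - 1 + (i:ℝ))) = ∏ i ∈ Finset.Icc a b, (α + (i:ℝ)) := by
  rw [← prod_shift (α-1) a b]
  exact Finset.prod_congr rfl (fun i _ => by ring)

lemma factR_ne (k : ℕ) : ((Nat.factorial k : ℝ)) ≠ 0 :=
  Nat.cast_ne_zero.mpr (Nat.factorial_ne_zero k)

lemma lagP_zero (α : ℝ) : lagP α 0 = 1 := by
  simp [lagP, lagCo, Nat.factorial]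

lemma lagP_derivative (α : ℝ) (n : ℕ) :
    Polynomial.derivative (lagP α (n+1)) = -lagP (α+1) n := by
  ext k
  rw [Polynomial.coeff_derivative, Polynomial.coeff_neg, coeff_lagP, coeff_lagP]
  by_cases h : k ≤ n
  · rw [if_pos (by omega), if_pos h]
    rw [lagCo, lagCo, prod_shift, show n - k = (n+1) - (k+1) by omega]
    rw [show (k+1).factorial = (k+1) * k.factorial from Nat.factorial_succ k]
    have h1 := factR_ne k
    have h2 := factR_ne ((n+1) - (k+1))
    push_cast
    field_simp
    ring
  · rw [if_neg (by omega), if_neg h, zero_mul, neg_zero]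

lemma lagP_P3 (α : ℝ) (n : ℕ) :
    lagP α n - Polynomial.derivative (lagP α n) = lagP (α+1) n := by
  ext k
  rw [Polynomial.coeff_sub, Polynomial.coeff_derivative, coeff_lagP, coeff_lagP, coeff_lagP]
  rcases lt_trichotomy k n with h | rfl | h
  · rw [if_pos h.le, if_pos (by omega), if_pos h.le]
    obtain ⟨j, rfl⟩ : ∃ j, n = k + 1 + j := ⟨n - (k+1), by omega⟩
    rw [lagCo, lagCo, lagCo, prod_shift,
      prod_peel_left α (k+1) (k+1+j) (by omega),
      show k+1+j+1 = (k+1+j)+1 by omega,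
      Finset.prod_Icc_succ_top (by omega : k+1+1 ≤ (k+1+j)+1),
      show k+1+j - k = j + 1 by omega, show k+1+j - (k+1) = j by omega,
      show (k+1).factorial = (k+1) * k.factorial from Nat.factorial_succ k,
      show (j+1).factorial = (j+1) * j.factorial from Nat.factorial_succ j]
    have h1 := factR_ne k
    have h2 := factR_ne j
    push_cast
    field_simp
    ring
  · rw [if_pos le_rfl, if_neg (by omega), if_pos le_rfl, zero_mul, sub_zero]
    rw [lagCo, lagCo, Finset.Icc_eq_empty (by omega)]
    simp
  · rw [if_neg (by omega), if_neg (by omega), if_neg (by omega), zero_mul, sub_zero]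

lemma lagP_P2 (α : ℝ) (n : ℕ) :
    Polynomial.C α * lagP α n + Polynomial.X * Polynomial.derivative (lagP α n)
      = Polynomial.C ((n:ℝ) + α) * lagP (α-1) n := by
  have key : ∀ k : ℕ, k ≤ n →
      (α + k) * lagCo α n k = ((n:ℝ) + α) * lagCo (α-1) n k := by
    intro k hk
    rw [lagCo, lagCo]
    rcases eq_or_lt_of_le hk with rfl | h
    · rw [Finset.Icc_eq_empty (by omega)]
      simp only [Finset.prod_empty]
      ring
    · obtain ⟨j, rfl⟩ : ∃ j, n = k + 1 + j := ⟨n - (k+1), by omega⟩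
      rw [show k+1+j = k+j+1 by omega]
      rw [prod_shift_down α k (k+j),
        prod_peel_left α k (k+j) (by omega),
        Finset.prod_Icc_succ_top (by omega : k+1 ≤ (k+j)+1)]
      push_cast
      ring
  ext k
  rcases k with _ | k
  · simp only [Polynomial.coeff_add, Polynomial.coeff_C_mul, Polynomial.mul_coeff_zero,
      Polynomial.coeff_X_zero, Polynomial.coeff_C_zero, zero_mul, add_zero, coeff_lagP]
    rw [if_pos (Nat.zero_le n), if_pos (Nat.zero_le n)]
    have := key 0 (Nat.zero_le n)
    push_cast at this ⊢
    linarith [this]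
  · simp only [Polynomial.coeff_add, Polynomial.coeff_C_mul, Polynomial.coeff_X_mul,
      Polynomial.coeff_derivative, coeff_lagP]
    by_cases h : k + 1 ≤ n
    · rw [if_pos h, if_pos h]
      have := key (k+1) h
      push_cast at this ⊢
      linarith [this]
    · rw [if_neg h, if_neg h]; ring

lemma lagP_P1 (α : ℝ) (n : ℕ) :
    Polynomial.C α * lagP α n + Polynomial.X * Polynomial.derivative (lagP α n)
      - Polynomial.X * lagP α n = Polynomial.C ((n:ℝ) + 1) * lagP (α-1) (n+1) := by
  ext k
  rcases k with _ | k
  · simp only [Polynomial.coeff_sub, Polynomial.coeff_add, Polynomial.coeff_C_mul,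
      Polynomial.mul_coeff_zero, Polynomial.coeff_X_zero, zero_mul, add_zero, sub_zero,
      Polynomial.coeff_C_zero, coeff_lagP]
    rw [if_pos (Nat.zero_le n), if_pos (Nat.zero_le (n+1))]
    rw [lagCo, lagCo, show n - 0 = n by omega, show n + 1 - 0 = n + 1 by omega]
    rw [prod_shift_down α 0 n,
      prod_peel_left α 0 n (Nat.zero_le n),
      show (n+1).factorial = (n+1) * n.factorial from Nat.factorial_succ n]
    have h1 := factR_ne n
    push_cast
    field_simp
    ring
  · simp only [Polynomial.coeff_sub, Polynomial.coeff_add, Polynomial.coeff_C_mul,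
      Polynomial.coeff_X_mul, Polynomial.coeff_derivative, coeff_lagP]
    rcases lt_trichotomy (k+1) (n+1) with h | h | h
    · -- k+1 ≤ n
      have hk : k + 1 ≤ n := by omega
      rw [if_pos hk, if_pos (by omega : k ≤ n), if_pos (by omega : k+1 ≤ n+1)]
      obtain ⟨j, rfl⟩ : ∃ j, n = k + 1 + j := ⟨n - (k+1), by omega⟩
      rw [show k+1+j = k+j+1 by omega]
      rw [lagCo, lagCo, lagCo]
      rw [show k+j+1 - k = j+1 by omega, show k+j+1 - (k+1) = j by omega,
        show k+j+1+1 - (k+1) = j+1 by omega,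
        prod_shift_down α (k+1) (k+j+1),
        prod_peel_left α (k+1) (k+j+1) (by omega),
        show (k+1).factorial = (k+1) * k.factorial from Nat.factorial_succ k,
        show (j+1).factorial = (j+1) * j.factorial from Nat.factorial_succ j]
      have h1 := factR_ne k
      have h2 := factR_ne j
      push_cast
      field_simp
      ring
    · -- k = n
      obtain rfl : k = n := by omega
      rw [if_neg (by omega), if_pos le_rfl, if_pos le_rfl]
      rw [lagCo, lagCo]
      rw [Finset.Icc_eq_empty (by omega : ¬ (k+1+1 ≤ k+1)),
        show k - k = 0 by omega, show k+1 - (k+1) = 0 by omega,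
        show (k+1).factorial = (k+1) * k.factorial from Nat.factorial_succ k]
      have h1 := factR_ne k
      simp only [Finset.prod_empty, Finset.Icc_eq_empty (by omega : ¬ (k+1 ≤ k))]
      push_cast
      field_simp
      ring
    · rw [if_neg (by omega), if_neg (by omega), if_neg (by omega)]; ring

-- iterated derivative of a constant
lemma iteratedDeriv_const' (n : ℕ) (c : ℝ) :
    iteratedDeriv n (fun _ : ℝ => c) = fun _ => if n = 0 then c else 0 := by
  induction n generalizing c with
  | zero => simp
  | succ n ih =>
    rw [iteratedDeriv_succ', show deriv (fun _ : ℝ => c) = (fun _ : ℝ => (0:ℝ)) from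
      funext fun y => deriv_const y c, ih 0]
    simp

section LocalCalc

variable {S : Set ℝ} {f g : ℝ → ℝ}

lemma contDiffOn_iteratedDeriv (hS : IsOpen S) (hf : ContDiffOn ℝ (⊤:ℕ∞) f S) (n : ℕ) :
    ContDiffOn ℝ (⊤:ℕ∞) (iteratedDeriv n f) S := by
  induction n with
  | zero => simpa [iteratedDeriv_zero] using hf
  | succ n ih =>
    rw [iteratedDeriv_succ]
    exact ih.deriv_of_isOpen hS (by simp)

lemma hasDerivAt_iteratedDeriv (hS : IsOpen S) (hf : ContDiffOn ℝ (⊤:ℕ∞) f S) (n : ℕ)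
    {x : ℝ} (hx : x ∈ S) :
    HasDerivAt (iteratedDeriv n f) (iteratedDeriv (n+1) f x) x := by
  have h1 : DifferentiableAt ℝ (iteratedDeriv n f) x := by
    have := (contDiffOn_iteratedDeriv hS hf n).contDiffAt (hS.mem_nhds hx)
    exact this.differentiableAt (by simp)
  rw [iteratedDeriv_succ]
  exact h1.hasDerivAt

lemma iteratedDeriv_mul_local (hS : IsOpen S) (hf : ContDiffOn ℝ (⊤:ℕ∞) f S)
    (hg : ContDiffOn ℝ (⊤:ℕ∞) g S) (n : ℕ) :
    ∀ x ∈ S, iteratedDeriv n (fun y => f y * g y) x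
      = ∑ k ∈ Finset.range (n+1),
          (n.choose k : ℝ) * (iteratedDeriv k f x * iteratedDeriv (n-k) g x) := by
  induction n with
  | zero => intro x _; simp
  | succ n ih =>
    intro x hx
    have heq : iteratedDeriv (n+1) (fun y => f y * g y) x
        = deriv (fun y => ∑ k ∈ Finset.range (n+1),
            (n.choose k : ℝ) * (iteratedDeriv k f y * iteratedDeriv (n-k) g y)) x := by
      rw [iteratedDeriv_succ]
      apply Filter.EventuallyEq.deriv_eq
      filter_upwards [hS.mem_nhds hx] with y hy using ih y hy
    rw [heq]
    have hsum : HasDerivAt (fun y => ∑ k ∈ Finset.range (n+1),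
        (n.choose k : ℝ) * (iteratedDeriv k f y * iteratedDeriv (n-k) g y))
        (∑ k ∈ Finset.range (n+1), (n.choose k : ℝ) *
          (iteratedDeriv (k+1) f x * iteratedDeriv (n-k) g x
            + iteratedDeriv k f x * iteratedDeriv (n-k+1) g x)) x := by
      apply HasDerivAt.fun_sum
      intro k _
      exact (((hasDerivAt_iteratedDeriv hS hf k hx).mul
        (hasDerivAt_iteratedDeriv hS hg (n-k) hx))).const_mul _
    rw [hsum.deriv]
    -- Pascal recombination
    set A : ℕ → ℝ := fun k => iteratedDeriv k f x with hA
    set B : ℕ → ℝ := fun k => iteratedDeriv k g x with hB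
    have key : ∑ k ∈ Finset.range (n+1), (n.choose k : ℝ) *
          (A (k+1) * B (n-k) + A k * B (n-k+1))
        = ∑ k ∈ Finset.range (n+1+1), ((n+1).choose k : ℝ) * (A k * B (n+1-k)) := by
      simp only [mul_add]
      rw [Finset.sum_add_distrib]
      have e1 : ∑ k ∈ Finset.range (n+1), (n.choose k : ℝ) * (A k * B (n-k+1))
          = (∑ k ∈ Finset.range n, (n.choose (k+1) : ℝ) * (A (k+1) * B (n-k)))
            + A 0 * B (n+1) := by
        rw [Finset.sum_range_succ' (fun k => (n.choose k : ℝ) * (A k * B (n-k+1))) n]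
        congr 1
        · apply Finset.sum_congr rfl
          intro k hk
          have : n - (k+1) + 1 = n - k := by
            have := Finset.mem_range.1 hk; omega
          rw [this]
        · simp
      rw [e1]
      have e2 : ∑ k ∈ Finset.range (n+1), (n.choose k : ℝ) * (A (k+1) * B (n-k))
          = (∑ k ∈ Finset.range n, (n.choose k : ℝ) * (A (k+1) * B (n-k)))
            + A (n+1) * B 0 := by
        rw [Finset.sum_range_succ]
        simp
      rw [e2]
      have e3 : ∑ k ∈ Finset.range (n+1+1), ((n+1).choose k : ℝ) * (A k * B (n+1-k))
          = (∑ k ∈ Finset.range (n+1), ((n+1).choose (k+1) : ℝ) * (A (k+1) * B (n-k)))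
            + A 0 * B (n+1) := by
        rw [Finset.sum_range_succ' (fun k => ((n+1).choose k : ℝ) * (A k * B (n+1-k))) (n+1)]
        congr 1
        · apply Finset.sum_congr rfl
          intro k hk
          have : n + 1 - (k+1) = n - k := by omega
          rw [this]
        · simp
      rw [e3, Finset.sum_range_succ (fun k => ((n+1).choose (k+1) : ℝ) * (A (k+1) * B (n-k))) n]
      have e4 : ∀ k, ((n+1).choose (k+1) : ℝ) = (n.choose k : ℝ) + (n.choose (k+1) : ℝ) := by
        intro k
        rw [Nat.choose_succ_succ]
        push_cast
        ring
      simp only [e4]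
      rw [Nat.choose_self, Nat.choose_succ_self, Nat.sub_self]
      push_cast
      simp only [add_mul]
      rw [Finset.sum_add_distrib]
      ring
    rw [key]

end LocalCalc

section WrLemmas

variable {S : Set ℝ} {f g : ℝ → ℝ}

lemma iteratedDeriv_const_mul_local (hS : IsOpen S) (hf : ContDiffOn ℝ (⊤:ℕ∞) f S)
    (c : ℝ) (n : ℕ) :
    ∀ x ∈ S, iteratedDeriv n (fun y => c * f y) x = c * iteratedDeriv n f x := by
  induction n with
  | zero => intro x _; simp
  | succ n ih =>
    intro x hx
    rw [iteratedDeriv_succ]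
    have heq : deriv (iteratedDeriv n (fun y => c * f y)) x
        = deriv (fun y => c * iteratedDeriv n f y) x := by
      apply Filter.EventuallyEq.deriv_eq
      filter_upwards [hS.mem_nhds hx] with y hy using ih y hy
    rw [heq, ((hasDerivAt_iteratedDeriv hS hf n hx).const_mul c).deriv]

lemma Wr_congr (hS : IsOpen S) {r : ℕ} {F G : Fin r → ℝ → ℝ}
    (h : ∀ i, Set.EqOn (F i) (G i) S) {x : ℝ} (hx : x ∈ S) : Wr F x = Wr G x := by
  unfold Wr
  congr 1
  ext i j
  exact (h i).iteratedDeriv_of_isOpen hS (j:ℕ) hx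

lemma Wr_mul (hS : IsOpen S) {r : ℕ} (hg : ContDiffOn ℝ (⊤:ℕ∞) g S)
    (h : Fin r → ℝ → ℝ) (hh : ∀ i, ContDiffOn ℝ (⊤:ℕ∞) (h i) S) {x : ℝ} (hx : x ∈ S) :
    Wr (fun i => fun y => h i y * g y) x = g x ^ r * Wr h x := by
  classical
  set T : Matrix (Fin r) (Fin r) ℝ := Matrix.of fun k j : Fin r =>
    if (k:ℕ) ≤ (j:ℕ) then (((j:ℕ).choose (k:ℕ) : ℝ)) * iteratedDeriv ((j:ℕ)-(k:ℕ)) g x else 0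
    with hT
  have key : (Matrix.of fun i j : Fin r => iteratedDeriv (j:ℕ) (fun y => h i y * g y) x)
      = (Matrix.of fun i k : Fin r => iteratedDeriv (k:ℕ) (h i) x) * T := by
    ext i j
    rw [Matrix.mul_apply]
    simp only [Matrix.of_apply, hT]
    rw [iteratedDeriv_mul_local hS (hh i) hg (j:ℕ) x hx]
    rw [Fin.sum_univ_eq_sum_range (fun k => iteratedDeriv k (h i) x *
      (if k ≤ (j:ℕ) then (((j:ℕ).choose k : ℝ)) * iteratedDeriv ((j:ℕ)-k) g x else 0)) r]
    rw [← Finset.sum_subset (Finset.range_subset_range.2 (Nat.succ_le_of_lt j.isLt))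
      (fun k _ hk => by
        rw [if_neg (fun hle => hk (Finset.mem_range.2 (Nat.lt_succ_of_le hle))), mul_zero])]
    apply Finset.sum_congr rfl
    intro k hk
    rw [if_pos (Nat.lt_succ_iff.1 (Finset.mem_range.1 hk))]
    ring
  rw [Wr, key, Matrix.det_mul, Wr]
  have hdet : T.det = g x ^ r := by
    rw [Matrix.det_of_upperTriangular (by
      intro i j hij
      simp only [Matrix.of_apply, hT, id] at hij ⊢
      rw [if_neg (by exact Nat.not_le.2 (Fin.lt_iff_val_lt_val.1 hij))])]
    have : ∀ i : Fin r, T i i = g x := by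
      intro i
      simp [hT, Nat.choose_self, iteratedDeriv_zero]
    rw [Finset.prod_congr rfl (fun i _ => this i), Finset.prod_const, Finset.card_univ,
      Fintype.card_fin]
  rw [hdet]
  ring

lemma Wr_const_mul (hS : IsOpen S) {r : ℕ} (κ : Fin r → ℝ) (h : Fin r → ℝ → ℝ)
    (hh : ∀ i, ContDiffOn ℝ (⊤:ℕ∞) (h i) S) {x : ℝ} (hx : x ∈ S) :
    Wr (fun i => fun y => κ i * h i y) x = (∏ i, κ i) * Wr h x := by
  rw [Wr, Wr]
  rw [show (Matrix.of fun i j : Fin r => iteratedDeriv (j:ℕ) (fun y => κ i * h i y) x)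
      = Matrix.of (fun i j : Fin r => κ i * iteratedDeriv (j:ℕ) (h i) x) by
    ext i j
    exact iteratedDeriv_const_mul_local hS (hh i) (κ i) (j:ℕ) x hx]
  exact Matrix.det_mul_column κ _

end WrLemmas

lemma laguerre_eq (α : ℝ) (n : ℕ) (x : ℝ) : laguerre α (n : ℤ) x = (lagP α n).eval x := by
  rw [laguerre, if_neg (by exact_mod_cast Int.not_lt.2 (Int.natCast_nonneg n))]
  simp only [Int.toNat_natCast]
  rw [lagP, Polynomial.eval_finset_sum]
  apply Finset.sum_congr rfl
  intro k _
  simp [lagCo]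
  try ring

-- smoothness of polynomial evaluation
lemma contDiff_polyEval (p : Polynomial ℝ) : ContDiff ℝ (⊤:ℕ∞) fun y : ℝ => p.eval y := by
  induction p using Polynomial.induction_on' with
  | add p q hp hq => simpa [Polynomial.eval_add] using hp.add hq
  | monomial n a =>
    simp only [Polynomial.eval_monomial]
    exact contDiff_const.mul (contDiff_id.pow n)

lemma contDiff_polyEval_neg (p : Polynomial ℝ) :
    ContDiff ℝ (⊤:ℕ∞) fun y : ℝ => p.eval (-y) :=
  (contDiff_polyEval p).comp contDiff_neg

lemma contDiff_exp_neg : ContDiff ℝ (⊤:ℕ∞) fun y : ℝ => Real.exp (-y) :=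
  Real.contDiff_exp.comp contDiff_neg

lemma contDiffOn_rpow_Ioi (p : ℝ) :
    ContDiffOn ℝ (⊤:ℕ∞) (fun y : ℝ => y ^ p) (Set.Ioi 0) := fun x hx =>
  (Real.contDiffAt_rpow_const_of_ne (ne_of_gt (Set.mem_Ioi.1 hx))).contDiffWithinAt

-- helper: x^α = x^(α-1) * x for x ≠ 0
lemma rpow_split (α : ℝ) {x : ℝ} (hx : x ≠ 0) : x ^ α = x ^ (α-1) * x := by
  rw [← Real.rpow_add_one hx (α-1), sub_add_cancel]

-- A1
lemma hasDerivAt_A1 (α : ℝ) (n : ℕ) {x : ℝ} (hx : x ≠ 0) :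
    HasDerivAt (fun y : ℝ => Real.exp (-y) * y ^ α * (lagP α n).eval y)
      (((n:ℝ)+1) * (Real.exp (-x) * x ^ (α-1) * (lagP (α-1) (n+1)).eval x)) x := by
  have hexp : HasDerivAt (fun y : ℝ => Real.exp (-y)) (Real.exp (-x) * (-1)) x :=
    (hasDerivAt_neg x).exp
  have hpow : HasDerivAt (fun y : ℝ => y ^ α) (α * x ^ (α-1)) x :=
    Real.hasDerivAt_rpow_const (Or.inl hx)
  have hlag := (lagP α n).hasDerivAt x
  have hP1 := congrArg (Polynomial.eval x) (lagP_P1 α n)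
  simp only [Polynomial.eval_sub, Polynomial.eval_add, Polynomial.eval_mul, Polynomial.eval_C,
    Polynomial.eval_X] at hP1
  refine HasDerivAt.congr_deriv ((hexp.mul hpow).mul hlag) (Eq.symm ?_)
  simp only [Pi.mul_apply]
  rw [rpow_split α hx]
  linear_combination (-(Real.exp (-x) * x ^ (α-1))) * hP1

-- A2
lemma hasDerivAt_A2 (α : ℝ) (n : ℕ) {x : ℝ} (hx : x ≠ 0) :
    HasDerivAt (fun y : ℝ => y ^ α * (lagP α n).eval (-y))
      (((n:ℝ)+α) * (x ^ (α-1) * (lagP (α-1) n).eval (-x))) x := by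
  have hpow : HasDerivAt (fun y : ℝ => y ^ α) (α * x ^ (α-1)) x :=
    Real.hasDerivAt_rpow_const (Or.inl hx)
  have hlag : HasDerivAt (fun y : ℝ => (lagP α n).eval (-y))
      ((Polynomial.derivative (lagP α n)).eval (-x) * (-1)) x :=
    ((lagP α n).hasDerivAt (-x)).comp x (hasDerivAt_neg x)
  have hP2 := congrArg (Polynomial.eval (-x)) (lagP_P2 α n)
  simp only [Polynomial.eval_add, Polynomial.eval_mul, Polynomial.eval_C,
    Polynomial.eval_X] at hP2
  refine HasDerivAt.congr_deriv (hpow.mul hlag) (Eq.symm ?_)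
  rw [rpow_split α hx]
  linear_combination (-(x ^ (α-1))) * hP2

-- A3
lemma hasDerivAt_A3 (β : ℝ) (n : ℕ) (x : ℝ) :
    HasDerivAt (fun y : ℝ => Real.exp (-y) * (lagP β n).eval y)
      (-(Real.exp (-x) * (lagP (β+1) n).eval x)) x := by
  have hexp : HasDerivAt (fun y : ℝ => Real.exp (-y)) (Real.exp (-x) * (-1)) x :=
    (hasDerivAt_neg x).exp
  have hlag := (lagP β n).hasDerivAt x
  have hP3 := congrArg (Polynomial.eval x) (lagP_P3 β n)
  simp only [Polynomial.eval_sub] at hP3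
  refine HasDerivAt.congr_deriv (hexp.mul hlag) (Eq.symm ?_)
  linear_combination (Real.exp (-x)) * hP3

-- A4
lemma hasDerivAt_A4 (β : ℝ) (n : ℕ) (x : ℝ) :
    HasDerivAt (fun y : ℝ => (lagP β (n+1)).eval (-y)) ((lagP (β+1) n).eval (-x)) x := by
  have hlag : HasDerivAt (fun y : ℝ => (lagP β (n+1)).eval (-y))
      ((Polynomial.derivative (lagP β (n+1))).eval (-x) * (-1)) x :=
    ((lagP β (n+1)).hasDerivAt (-x)).comp x (hasDerivAt_neg x)
  have hD := congrArg (Polynomial.eval (-x)) (lagP_derivative β n)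
  simp only [Polynomial.eval_neg] at hD
  convert hlag using 1
  linear_combination hD

/-- **Reduction when `n'_{r4} = 0`.** If the fourth sequence ends in `0`, then for `x > 0`,
`Ω^{(α)}[n; m; m'; n'](x) = (−1)^{r1+r2+r4−1} (∏ᵢ(n_i + 1) ∏ᵢ(m_i + α)) ·
Ω^{(α−1)}[n_1+1,…,n_{r1}+1; m; m'; n'_1−1,…,n'_{r4−1}−1](x)`. -/
theorem omega4_reduction_fourth (α : ℝ) (r1 r2 r3 r4 : ℕ) (a b c d : ℕ → ℕ)
    (ha : ∀ i j, i < j → j < r1 → a j < a i)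
    (hb : ∀ i j, i < j → j < r2 → b j < b i)
    (hc : ∀ i j, i < j → j < r3 → c j < c i)
    (hd : ∀ i j, i < j → j < r4 → d j < d i)
    (hr4 : 0 < r4) (hd0 : d (r4 - 1) = 0) :
    ∀ x : ℝ, 0 < x →
      Omega4 α r1 r2 r3 r4 a b c d x =
        (-1 : ℝ) ^ (r1 + r2 + r4 - 1) *
          ((∏ i ∈ Finset.range r1, ((a i : ℝ) + 1)) *
            (∏ i ∈ Finset.range r2, ((b i : ℝ) + α))) *
          Omega4 (α - 1) r1 r2 r3 (r4 - 1) (fun i => a i + 1) b c (fun i => d i - 1) x := by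
  obtain ⟨m, rfl⟩ : ∃ m, r4 = m + 1 := ⟨r4 - 1, by omega⟩
  simp only [Nat.add_sub_cancel] at hd0 ⊢
  intro x hx
  have hx0 : x ≠ 0 := ne_of_gt hx
  set S : Set ℝ := Set.Ioi 0 with hS_def
  have hS : IsOpen S := isOpen_Ioi
  have hxS : x ∈ S := hx
  set N : ℕ := r1 + r2 + r3 + m with hN
  -- the original functions
  set F : Fin (N+1) → ℝ → ℝ := fun i => fun y =>
      if (i : ℕ) < r1 then laguerre α (a (i : ℕ)) y
      else if (i : ℕ) < r1 + r2 then Real.exp y * laguerre α (b ((i : ℕ) - r1)) (-y)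
      else if (i : ℕ) < r1 + r2 + r3 then
        y ^ (-α) * laguerre (-α) (c ((i : ℕ) - r1 - r2)) y
      else Real.exp y * y ^ (-α) * laguerre (-α) (d ((i : ℕ) - r1 - r2 - r3)) (-y)
    with hF_def
  -- the new functions (for parameter α-1)
  set H : Fin N → ℝ → ℝ := fun i => fun y =>
      if (i : ℕ) < r1 then laguerre (α-1) ((a (i : ℕ) + 1 : ℕ)) y
      else if (i : ℕ) < r1 + r2 then Real.exp y * laguerre (α-1) (b ((i : ℕ) - r1)) (-y)
      else if (i : ℕ) < r1 + r2 + r3 then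
        y ^ (-(α-1)) * laguerre (-(α-1)) (c ((i : ℕ) - r1 - r2)) y
      else Real.exp y * y ^ (-(α-1)) * laguerre (-(α-1)) ((d ((i : ℕ) - r1 - r2 - r3) - 1 : ℕ)) (-y)
    with hH_def
  -- auxiliary functions
  set u : ℝ → ℝ := fun y => Real.exp y * y ^ (-α) with hu_def
  set w : ℝ → ℝ := fun y => Real.exp (-y) * y ^ (α-1) with hw_def
  set q : Fin (N+1) → ℝ → ℝ := fun i => fun y =>
      if (i : ℕ) < r1 then Real.exp (-y) * y ^ α * (lagP α (a (i:ℕ))).eval y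
      else if (i : ℕ) < r1 + r2 then y ^ α * (lagP α (b ((i:ℕ) - r1))).eval (-y)
      else if (i : ℕ) < r1 + r2 + r3 then Real.exp (-y) * (lagP (-α) (c ((i:ℕ) - r1 - r2))).eval y
      else if (i : ℕ) < N then (lagP (-α) (d ((i:ℕ) - r1 - r2 - r3))).eval (-y)
      else 1
    with hq_def
  set qd : Fin N → ℝ → ℝ := fun i => fun y =>
      if (i : ℕ) < r1 then
        ((a (i:ℕ) : ℝ) + 1) * (Real.exp (-y) * y ^ (α-1) * (lagP (α-1) (a (i:ℕ) + 1)).eval y)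
      else if (i : ℕ) < r1 + r2 then
        ((b ((i:ℕ)-r1) : ℝ) + α) * (y ^ (α-1) * (lagP (α-1) (b ((i:ℕ)-r1))).eval (-y))
      else if (i : ℕ) < r1 + r2 + r3 then
        -(Real.exp (-y) * (lagP (-α+1) (c ((i:ℕ)-r1-r2))).eval y)
      else (lagP (-α+1) (d ((i:ℕ)-r1-r2-r3) - 1)).eval (-y)
    with hqd_def
  set κ : Fin N → ℝ := fun i =>
      if (i : ℕ) < r1 then ((a (i:ℕ) : ℝ) + 1)
      else if (i : ℕ) < r1 + r2 then ((b ((i:ℕ)-r1) : ℝ) + α)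
      else if (i : ℕ) < r1 + r2 + r3 then -1
      else 1
    with hκ_def
  set Hp : Fin N → ℝ → ℝ := fun i => fun y =>
      if (i : ℕ) < r1 then (lagP (α-1) (a (i:ℕ) + 1)).eval y
      else if (i : ℕ) < r1 + r2 then Real.exp y * (lagP (α-1) (b ((i:ℕ)-r1))).eval (-y)
      else if (i : ℕ) < r1 + r2 + r3 then
        y ^ (-(α-1)) * (lagP (-(α-1)) (c ((i:ℕ)-r1-r2))).eval y
      else Real.exp y * y ^ (-(α-1)) * (lagP (-(α-1)) (d ((i:ℕ)-r1-r2-r3) - 1)).eval (-y)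
    with hHp_def
  -- ===== smoothness =====
  have hu_smooth : ContDiffOn ℝ (⊤:ℕ∞) u S := by
    rw [hu_def, hS_def]
    exact (Real.contDiff_exp.contDiffOn).mul (contDiffOn_rpow_Ioi (-α))
  have hw_smooth : ContDiffOn ℝ (⊤:ℕ∞) w S := by
    rw [hw_def, hS_def]
    exact (contDiff_exp_neg.contDiffOn).mul (contDiffOn_rpow_Ioi (α-1))
  have hq_smooth : ∀ i : Fin (N+1), ContDiffOn ℝ (⊤:ℕ∞) (q i) S := by
    intro i
    rw [hq_def, hS_def]
    by_cases h1 : (i:ℕ) < r1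
    · simp only [h1, if_true]
      exact ((contDiff_exp_neg.contDiffOn).mul (contDiffOn_rpow_Ioi α)).mul
        (contDiff_polyEval _).contDiffOn
    by_cases h2 : (i:ℕ) < r1 + r2
    · simp only [h1, h2, if_true, if_false]
      exact (contDiffOn_rpow_Ioi α).mul (contDiff_polyEval_neg _).contDiffOn
    by_cases h3 : (i:ℕ) < r1 + r2 + r3
    · simp only [h1, h2, h3, if_true, if_false]
      exact (contDiff_exp_neg.mul (contDiff_polyEval _)).contDiffOn
    by_cases h4 : (i:ℕ) < N
    · simp only [h1, h2, h3, h4, if_true, if_false]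
      exact (contDiff_polyEval_neg _).contDiffOn
    · simp only [h1, h2, h3, h4, if_false]
      exact contDiffOn_const
  have hHp_smooth : ∀ i : Fin N, ContDiffOn ℝ (⊤:ℕ∞) (Hp i) S := by
    intro i
    rw [hHp_def, hS_def]
    by_cases h1 : (i:ℕ) < r1
    · simp only [h1, if_true]
      exact (contDiff_polyEval _).contDiffOn
    by_cases h2 : (i:ℕ) < r1 + r2
    · simp only [h1, h2, if_true, if_false]
      exact (Real.contDiff_exp.contDiffOn).mul (contDiff_polyEval_neg _).contDiffOn
    by_cases h3 : (i:ℕ) < r1 + r2 + r3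
    · simp only [h1, h2, h3, if_true, if_false]
      exact (contDiffOn_rpow_Ioi _).mul (contDiff_polyEval _).contDiffOn
    · simp only [h1, h2, h3, if_false]
      exact ((Real.contDiff_exp.contDiffOn).mul (contDiffOn_rpow_Ioi _)).mul
        (contDiff_polyEval_neg _).contDiffOn
  -- ===== step 1 : F = q * u on S =====
  have hF_eq : ∀ i : Fin (N+1), Set.EqOn (F i) (fun y => q i y * u y) S := by
    intro i y hy
    have hy0 : (0:ℝ) < y := hy
    have hyne : y ≠ 0 := ne_of_gt hy0
    have hrne : y ^ α ≠ 0 := ne_of_gt (Real.rpow_pos_of_pos hy0 α)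
    simp only [hF_def, hq_def, hu_def]
    by_cases h1 : (i:ℕ) < r1
    · simp only [h1, if_true]
      rw [laguerre_eq, Real.exp_neg, Real.rpow_neg hy0.le]
      field_simp
    by_cases h2 : (i:ℕ) < r1 + r2
    · simp only [h1, h2, if_true, if_false]
      rw [laguerre_eq, Real.rpow_neg hy0.le]
      field_simp
    by_cases h3 : (i:ℕ) < r1 + r2 + r3
    · simp only [h1, h2, h3, if_true, if_false]
      rw [laguerre_eq, Real.exp_neg]
      field_simp
    by_cases h4 : (i:ℕ) < N
    · simp only [h1, h2, h3, h4, if_true, if_false]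
      rw [laguerre_eq]
      ring
    · simp only [h1, h2, h3, h4, if_false]
      have hi : (i:ℕ) = N := by omega
      have hm : (i:ℕ) - r1 - r2 - r3 = m := by omega
      rw [hm, hd0, laguerre_eq, lagP_zero]
      simp
  -- ===== step 2 : derivative of q =====
  have hqd_deriv : ∀ (i : Fin N), ∀ y ∈ S, HasDerivAt (q (Fin.castSucc i)) (qd i y) y := by
    intro i y hy
    have hyne : y ≠ 0 := ne_of_gt (Set.mem_Ioi.1 hy)
    have hcast : ((Fin.castSucc i : Fin (N+1)) : ℕ) = (i:ℕ) := Fin.coe_castSucc i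
    rw [hq_def, hqd_def]
    simp only [hcast]
    by_cases h1 : (i:ℕ) < r1
    · simp only [h1, if_true]
      exact hasDerivAt_A1 α (a (i:ℕ)) hyne
    by_cases h2 : (i:ℕ) < r1 + r2
    · simp only [h1, h2, if_true, if_false]
      exact hasDerivAt_A2 α _ hyne
    by_cases h3 : (i:ℕ) < r1 + r2 + r3
    · simp only [h1, h2, h3, if_true, if_false]
      exact hasDerivAt_A3 (-α) _ y
    · have h4 : (i:ℕ) < N := i.isLt
      simp only [h1, h2, h3, h4, if_true, if_false]
      have hlt : (i:ℕ) - r1 - r2 - r3 < m := by omega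
      have hdpos : 0 < d ((i:ℕ) - r1 - r2 - r3) := by
        have := hd ((i:ℕ) - r1 - r2 - r3) m hlt (by omega)
        omega
      have hone : d ((i:ℕ) - r1 - r2 - r3) = (d ((i:ℕ) - r1 - r2 - r3) - 1) + 1 := by omega
      rw [hone]
      have := hasDerivAt_A4 (-α) (d ((i:ℕ) - r1 - r2 - r3) - 1) y
      simpa using this
  -- ===== step 3 : pivot expansion =====
  have hlastfun : q (Fin.last N) = fun _ => (1:ℝ) := by
    funext y
    rw [hq_def]
    simp only [Fin.val_last]
    rw [if_neg (by omega), if_neg (by omega), if_neg (by omega), if_neg (by omega)]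
  have hWr2 : Wr q x = (-1:ℝ)^N * Wr qd x := by
    rw [Wr, Matrix.det_succ_row _ (Fin.last N)]
    rw [Finset.sum_eq_single_of_mem (0 : Fin (N+1)) (Finset.mem_univ _) (by
      intro j _ hj
      have hjne : (j:ℕ) ≠ 0 := fun hc => hj (Fin.ext hc)
      rw [Matrix.of_apply, hlastfun, iteratedDeriv_const']
      simp [hjne])]
    have hsub : (Matrix.of fun i j : Fin (N+1) => iteratedDeriv (j:ℕ) (q i) x).submatrix
        (Fin.last N).succAbove (0 : Fin (N+1)).succAbove
        = Matrix.of fun i j : Fin N => iteratedDeriv (j:ℕ) (qd i) x := by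
      ext i j
      simp only [Matrix.submatrix_apply, Fin.succAbove_last, Fin.zero_succAbove,
        Matrix.of_apply, Fin.val_succ]
      rw [iteratedDeriv_succ']
      exact Set.EqOn.iteratedDeriv_of_isOpen
        (fun y hy => (hqd_deriv i y hy).deriv) hS (j:ℕ) hxS
    rw [hsub]
    rw [Matrix.of_apply, hlastfun, iteratedDeriv_const']
    simp only [Fin.val_last, Fin.val_zero, add_zero, eq_self_iff_true, if_true]
    rw [← Wr]
    ring
  -- ===== step 4 : qd = κ * (Hp * w) on S =====
  have hqd_eq : ∀ i : Fin N, Set.EqOn (qd i) (fun y => κ i * (Hp i y * w y)) S := by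
    intro i y hy
    have hy0 : (0:ℝ) < y := hy
    have hyne : y ≠ 0 := ne_of_gt hy0
    simp only [hqd_def, hκ_def, hHp_def, hw_def]
    by_cases h1 : (i:ℕ) < r1
    · simp only [h1, if_true]
      ring
    by_cases h2 : (i:ℕ) < r1 + r2
    · simp only [h1, h2, if_true, if_false]
      rw [Real.exp_neg]
      field_simp
      try ring
    by_cases h3 : (i:ℕ) < r1 + r2 + r3
    · simp only [h1, h2, h3, if_true, if_false]
      have hrne : y ^ (α-1) ≠ 0 := ne_of_gt (Real.rpow_pos_of_pos hy0 _)
      rw [show -α + 1 = -(α-1) by ring,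
        show y ^ (-(α-1)) = (y ^ (α-1))⁻¹ from by rw [Real.rpow_neg hy0.le]]
      field_simp
      try ring
    · simp only [h1, h2, h3, if_false]
      have hrne : y ^ (α-1) ≠ 0 := ne_of_gt (Real.rpow_pos_of_pos hy0 _)
      rw [show -α + 1 = -(α-1) by ring, Real.exp_neg,
        show y ^ (-(α-1)) = (y ^ (α-1))⁻¹ from by rw [Real.rpow_neg hy0.le]]
      field_simp
      try ring
  -- ===== assemble Wronskian chain =====
  have hWr1 : Wr F x = u x ^ (N+1) * Wr q x := by
    rw [Wr_congr hS hF_eq hxS, Wr_mul hS hu_smooth q hq_smooth hxS]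
  have hWr3 : Wr qd x = (∏ i : Fin N, κ i) * (w x ^ N * Wr Hp x) := by
    rw [Wr_congr hS hqd_eq hxS,
      Wr_const_mul hS κ (fun i => fun y => Hp i y * w y)
        (fun i => (hHp_smooth i).mul hw_smooth) hxS,
      Wr_mul hS hw_smooth Hp hHp_smooth hxS]
  have hHpH : Wr Hp x = Wr H x := by
    have : Hp = H := by
      funext i y
      rw [hHp_def, hH_def]
      by_cases h1 : (i:ℕ) < r1
      · simp only [h1, if_true]; rw [laguerre_eq]
      by_cases h2 : (i:ℕ) < r1 + r2
      · simp only [h1, h2, if_true, if_false]; rw [laguerre_eq]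
      by_cases h3 : (i:ℕ) < r1 + r2 + r3
      · simp only [h1, h2, h3, if_true, if_false]; rw [laguerre_eq]
      · simp only [h1, h2, h3, if_false]; rw [laguerre_eq]
    rw [this]
  -- ===== κ product =====
  have hκ_prod : (∏ i : Fin N, κ i)
      = (-1:ℝ)^r3 * ((∏ i ∈ Finset.range r1, ((a i : ℝ) + 1)) *
          (∏ i ∈ Finset.range r2, ((b i : ℝ) + α))) := by
    rw [hκ_def]
    rw [Fin.prod_univ_eq_prod_range (fun k : ℕ =>
      if k < r1 then ((a k : ℝ) + 1)
      else if k < r1 + r2 then ((b (k - r1) : ℝ) + α)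
      else if k < r1 + r2 + r3 then -1 else 1) N]
    rw [hN, Finset.prod_range_add, Finset.prod_range_add, Finset.prod_range_add]
    have e1 : ∏ i ∈ Finset.range r1, (if i < r1 then ((a i : ℝ) + 1)
        else if i < r1 + r2 then ((b (i - r1) : ℝ) + α)
        else if i < r1 + r2 + r3 then -1 else 1) = ∏ i ∈ Finset.range r1, ((a i : ℝ) + 1) :=
      Finset.prod_congr rfl fun i hi => by
        rw [if_pos (Finset.mem_range.1 hi)]
    have e2 : ∏ i ∈ Finset.range r2, (if r1 + i < r1 then ((a (r1+i) : ℝ) + 1)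
        else if r1 + i < r1 + r2 then ((b (r1 + i - r1) : ℝ) + α)
        else if r1 + i < r1 + r2 + r3 then -1 else 1)
        = ∏ i ∈ Finset.range r2, ((b i : ℝ) + α) :=
      Finset.prod_congr rfl fun i hi => by
        have hi' := Finset.mem_range.1 hi
        rw [if_neg (by omega), if_pos (by omega), show r1 + i - r1 = i by omega]
    have e3 : ∏ i ∈ Finset.range r3, (if r1 + r2 + i < r1 then ((a (r1+r2+i) : ℝ) + 1)
        else if r1 + r2 + i < r1 + r2 then ((b (r1 + r2 + i - r1) : ℝ) + α)
        else if r1 + r2 + i < r1 + r2 + r3 then -1 else 1) = (-1:ℝ)^r3 := by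
      trans (∏ _i ∈ Finset.range r3, (-1:ℝ))
      · exact Finset.prod_congr rfl fun i hi => by
          have hi' := Finset.mem_range.1 hi
          rw [if_neg (by omega), if_neg (by omega), if_pos (by omega)]
      · rw [Finset.prod_const, Finset.card_range]
    have e4 : ∏ i ∈ Finset.range m, (if r1 + r2 + r3 + i < r1 then ((a (r1+r2+r3+i) : ℝ) + 1)
        else if r1 + r2 + r3 + i < r1 + r2 then ((b (r1 + r2 + r3 + i - r1) : ℝ) + α)
        else if r1 + r2 + r3 + i < r1 + r2 + r3 then -1 else 1) = 1 := by
      trans (∏ _i ∈ Finset.range m, (1:ℝ))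
      · exact Finset.prod_congr rfl fun i hi => by
          rw [if_neg (by omega), if_neg (by omega), if_neg (by omega)]
      · exact Finset.prod_const_one
    rw [e1, e2, e3, e4]
    ring
  -- ===== final assembly =====
  have e1 : Omega4 α r1 r2 r3 (m+1) a b c d x
      = Real.exp (-((r2:ℝ) + ((m+1:ℕ):ℝ)) * x) *
        x ^ ((α + (r1:ℝ) + (r2:ℝ)) * ((r3:ℝ) + ((m+1:ℕ):ℝ))) * Wr F x := rfl
  have e2 : Omega4 (α-1) r1 r2 r3 m (fun i => a i + 1) b c (fun i => d i - 1) x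
      = Real.exp (-((r2:ℝ) + (m:ℝ)) * x) *
        x ^ ((α - 1 + (r1:ℝ) + (r2:ℝ)) * ((r3:ℝ) + (m:ℝ))) * Wr H x := rfl
  rw [e1, e2, hWr1, hWr2, hWr3, hHpH, hκ_prod]
  simp only [hu_def, hw_def]
  have p1 : (Real.exp x * x ^ (-α)) ^ (N+1)
      = Real.exp (((N+1:ℕ):ℝ) * x) * x ^ ((-α) * ((N+1:ℕ):ℝ)) := by
    rw [mul_pow, ← Real.exp_nat_mul, ← Real.rpow_natCast (x ^ (-α)) (N+1),
      ← Real.rpow_mul hx.le]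
  have p2 : (Real.exp (-x) * x ^ (α-1)) ^ N
      = Real.exp (((N:ℕ):ℝ) * (-x)) * x ^ ((α-1) * ((N:ℕ):ℝ)) := by
    rw [mul_pow, ← Real.exp_nat_mul, ← Real.rpow_natCast (x ^ (α-1)) N,
      ← Real.rpow_mul hx.le]
  rw [p1, p2]
  have hexpc : Real.exp (-((r2:ℝ) + ((m+1:ℕ):ℝ)) * x) *
      (Real.exp (((N+1:ℕ):ℝ) * x) * Real.exp (((N:ℕ):ℝ) * (-x)))
      = Real.exp (-((r2:ℝ) + (m:ℝ)) * x) := by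
    rw [← Real.exp_add, ← Real.exp_add]
    congr 1
    push_cast
    ring
  have hxc : x ^ ((α + (r1:ℝ) + (r2:ℝ)) * ((r3:ℝ) + ((m+1:ℕ):ℝ))) *
      (x ^ ((-α) * ((N+1:ℕ):ℝ)) * x ^ ((α-1) * ((N:ℕ):ℝ)))
      = x ^ ((α - 1 + (r1:ℝ) + (r2:ℝ)) * ((r3:ℝ) + (m:ℝ))) := by
    rw [← Real.rpow_add hx, ← Real.rpow_add hx]
    congr 1
    rw [hN]
    push_cast
    ring
  have hsgn : (-1:ℝ)^N * (-1:ℝ)^r3 = (-1:ℝ)^(r1 + r2 + (m+1) - 1) := by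
    rw [← pow_add, show r1 + r2 + (m+1) - 1 = r1 + r2 + m by omega,
      show N + r3 = (r1 + r2 + m) + 2*r3 by rw [hN]; omega, pow_add, pow_mul]
    norm_num
  rw [← hexpc, ← hxc, ← hsgn]
  ring
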